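/- Sufficient condition for non-explosion with one branching type: if the branching non-linearity consists of a single monomial a_k u^k with k ≥ 2, and |a_k| · ‖ψ‖_∞^{k-1} · (1 − e^{-βT(k-1)}) < 1, then the quantity û(0,x) = E[∏_{i=1}^{N_T} ψ(z_T^i) (a_k/p_k)^{ω_k}] is finite and bounded by ‖ψ‖_∞ / (1 − |a_k| ‖ψ‖_∞^{k-1}(1 − e^{-βT(k-1)}))^{1/(k-1)}. -/

import Mathlib

open MeasureTheory

noncomputable def mseq (K : ℝ) : ℕ → ℝ
  | 0 => 1
  | (n+1) => mseq K n * (K*n+1) / (K*(n+1))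

lemma mseq_nonneg {K : ℝ} (hK : 0 < K) (n : ℕ) : 0 ≤ mseq K n := by
  induction n with
  | zero => norm_num [mseq]
  | succ n ih =>
      rw [mseq]
      have h1 : (0:ℝ) ≤ K*n+1 := by positivity
      have h2 : (0:ℝ) < K*(n+1) := by positivity
      positivity

lemma mseq_rec {K : ℝ} (hK : 0 < K) (n : ℕ) :
    ((n:ℝ)+1) * mseq K (n+1) = ((n:ℝ) + 1/K) * mseq K n := by
  rw [mseq]
  have h2 : (K:ℝ) ≠ 0 := ne_of_gt hK
  have h3 : ((n:ℝ)+1) ≠ 0 := by positivity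
  field_simp

lemma deriv_identity {K : ℝ} (hK : 0 < K) (N : ℕ) (x : ℝ) :
    (1-x) * (∑ n ∈ Finset.range N, mseq K n * ((n:ℝ) * x^(n-1)))
      = (1/K) * (∑ n ∈ Finset.range N, mseq K n * x^n)
        - (N:ℝ) * mseq K N * x^(N-1) := by
  induction N with
  | zero => simp
  | succ N ih =>
      rw [Finset.sum_range_succ, Finset.sum_range_succ, mul_add, ih]
      have hrec := mseq_rec hK N
      rcases Nat.eq_zero_or_pos N with h0 | hpos
      · subst h0
        simp only [mseq] at hrec ⊢
        have hK' : (K:ℝ) ≠ 0 := ne_of_gt hK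
        simp
      · have hx : x^(N-1) * x = x^N := by
          rw [← pow_succ]; congr 1; omega
        have hN1 : ((N:ℕ)+1-1 : ℕ) = N := by omega
        rw [hN1]
        push_cast
        linear_combination (-(mseq K N * (N:ℝ))) * hx + x^N * hrec

lemma sum_mseq_le {K : ℝ} (hK : 0 < K) {y : ℝ} (hy0 : 0 ≤ y) (hy1 : y < 1) (N : ℕ) :
    (∑ n ∈ Finset.range N, mseq K n * y^n) * (1-y) ^ ((1/K : ℝ)) ≤ 1 := by
  set α : ℝ := 1/K with hα
  have hαpos : 0 < α := by positivity
  set g : ℝ → ℝ := fun x => (∑ n ∈ Finset.range N, mseq K n * x^n) * (1-x) ^ α with hgdef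
  have hder : ∀ x ∈ Set.Ioo (0:ℝ) y, HasDerivAt g
      ((∑ n ∈ Finset.range N, mseq K n * ((n:ℝ) * x^(n-1))) * (1-x)^α
        + (∑ n ∈ Finset.range N, mseq K n * x^n) * (α * (1-x)^(α-1) * (-1))) x := by
    intro x hx
    have h1x : (0:ℝ) < 1 - x := by linarith [hx.2, hy1]
    have hS : HasDerivAt (fun x : ℝ => ∑ n ∈ Finset.range N, mseq K n * x^n)
        (∑ n ∈ Finset.range N, mseq K n * ((n:ℝ) * x^(n-1))) x := by
      apply HasDerivAt.fun_sum
      intro n _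
      exact (hasDerivAt_pow n x).const_mul (mseq K n)
    have hinner : HasDerivAt (fun x : ℝ => 1 - x) (-1) x := (hasDerivAt_id x).const_sub 1
    have houter := Real.hasDerivAt_rpow_const (x := 1-x) (p := α) (Or.inl h1x.ne')
    have hR := houter.comp x hinner
    exact hS.mul hR
  have hanti : AntitoneOn g (Set.Icc 0 y) := by
    apply antitoneOn_of_deriv_nonpos (convex_Icc 0 y)
    · apply ContinuousOn.mul
      · exact (continuous_finset_sum _ fun n _ =>
          continuous_const.mul (continuous_pow n)).continuousOn
      · apply ContinuousOn.rpow_const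
        · exact (continuous_const.sub continuous_id).continuousOn
        · intro x _; right; exact le_of_lt hαpos
    · rw [interior_Icc]
      intro x hx
      exact ((hder x hx).differentiableAt).differentiableWithinAt
    · rw [interior_Icc]
      intro x hx
      rw [(hder x hx).deriv]
      have h1x : (0:ℝ) < 1 - x := by linarith [hx.2, hy1]
      have hxpos : (0:ℝ) < x := hx.1
      have hRpos : (0:ℝ) < (1-x)^α := Real.rpow_pos_of_pos h1x α
      have hrw : (1-x)^(α-1) = (1-x)^α / (1-x) := Real.rpow_sub_one h1x.ne' α
      rw [hrw]
      have key := deriv_identity hK N x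
      have hfactor : (∑ n ∈ Finset.range N, mseq K n * ((n:ℝ) * x^(n-1))) * (1-x)^α
          + (∑ n ∈ Finset.range N, mseq K n * x^n) * (α * ((1-x)^α/(1-x)) * (-1))
          = ((1-x)^α/(1-x)) *
            ((1-x) * (∑ n ∈ Finset.range N, mseq K n * ((n:ℝ) * x^(n-1)))
              - α * (∑ n ∈ Finset.range N, mseq K n * x^n)) := by
        field_simp
        ring
      rw [hfactor, key]
      have : (1/K) * (∑ n ∈ Finset.range N, mseq K n * x^n)
          - (N:ℝ) * mseq K N * x^(N-1) - α * (∑ n ∈ Finset.range N, mseq K n * x^n)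
          = -((N:ℝ) * mseq K N * x^(N-1)) := by rw [hα]; ring
      rw [this]
      have hm : 0 ≤ (N:ℝ) * mseq K N * x^(N-1) := by
        have := mseq_nonneg hK N
        positivity
      have hq : 0 ≤ (1-x)^α / (1-x) := by positivity
      exact mul_nonpos_of_nonneg_of_nonpos hq (by linarith)
  have h0m : (0:ℝ) ∈ Set.Icc (0:ℝ) y := by constructor <;> linarith
  have hym : y ∈ Set.Icc (0:ℝ) y := by constructor <;> linarith
  have hgy := hanti h0m hym hy0
  have hg0 : g 0 ≤ 1 := by
    rw [hgdef]
    simp only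
    rcases Nat.eq_zero_or_pos N with h0 | hpos
    · subst h0; simp
    · have : ∑ n ∈ Finset.range N, mseq K n * (0:ℝ)^n = 1 := by
        rw [Finset.sum_eq_single_of_mem 0 (Finset.mem_range.mpr hpos)]
        · simp [mseq]
        · intro n _ hn
          simp [zero_pow hn]
      rw [this]
      simp
  calc g y ≤ g 0 := hgy
    _ ≤ 1 := hg0

lemma intA (b : ℝ) (hb : b ≠ 0) (n : ℕ) (t : ℝ) :
    ∫ s in (0:ℝ)..t, Real.exp (b*s) * (Real.exp (b*s) - 1)^n
      = (Real.exp (b*t) - 1)^(n+1) / (b*(n+1)) := by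
  have h : ∀ s ∈ Set.uIcc (0:ℝ) t,
      HasDerivAt (fun u => (Real.exp (b*u) - 1)^(n+1) / (b*(n+1)))
        (Real.exp (b*s) * (Real.exp (b*s) - 1)^n) s := by
    intro s _
    have h1 : HasDerivAt (fun u : ℝ => b * u) b s := by
      simpa using (hasDerivAt_id s).const_mul b
    have h2 := (h1.exp.sub_const 1).fun_pow (n+1)
    have h3 := h2.div_const (b*(n+1))
    refine h3.congr_deriv ?_
    have : (n:ℝ) + 1 ≠ 0 := by positivity
    rw [Nat.add_sub_cancel]; push_cast
    field_simp
  rw [intervalIntegral.integral_eq_sub_of_hasDerivAt h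
    (((Real.continuous_exp.comp (continuous_const.mul continuous_id)).mul
      (((Real.continuous_exp.comp (continuous_const.mul continuous_id)).sub
        continuous_const).pow n)).intervalIntegrable 0 t)]
  simp

lemma one_sub_exp_neg (b s : ℝ) :
    1 - Real.exp (-b*s) = Real.exp (-b*s) * (Real.exp (b*s) - 1) := by
  have h : Real.exp (-b*s) * Real.exp (b*s) = 1 := by
    rw [← Real.exp_add, show -b*s + b*s = 0 by ring]; exact Real.exp_zero
  linear_combination (-1 : ℝ) * h

lemma Pformula (β K : ℝ) (hβ : 0 < β) (hK : 0 < K) (P : ℝ → ℕ → ℝ)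
    (hP0 : ∀ t : ℝ, P t 0 = Real.exp (-β * t))
    (hPrec : ∀ (t : ℝ) (n : ℕ),
      P t (n + 1)
        = β * ∫ s in (0:ℝ)..t,
            P s n * (K * n + 1)
              * Real.exp (-β * (K+1) * (t - s))
              * Real.exp (-β * (t - s) * (K * n))) :
    ∀ (n : ℕ) (t : ℝ), P t n = mseq K n * Real.exp (-β*t)
      * (1 - Real.exp (-(β*K)*t))^n := by
  intro n
  induction n with
  | zero => intro t; simp [mseq, hP0 t]
  | succ n ih =>
      intro t
      rw [hPrec t n]
      have hint : ∀ s : ℝ, P s n * (K*(n:ℝ)+1) * Real.exp (-β*(K+1)*(t-s))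
            * Real.exp (-β*(t-s)*(K*(n:ℝ)))
          = (mseq K n * (K*(n:ℝ)+1) * Real.exp (-(β + β*K*((n:ℝ)+1))*t))
            * (Real.exp ((β*K)*s) * (Real.exp ((β*K)*s)-1)^n) := by
        intro s
        rw [ih s]
        rw [one_sub_exp_neg (β*K) s, mul_pow, ← Real.exp_nat_mul]
        have e1 : Real.exp (-β*s) * Real.exp ((n:ℝ)*(-(β*K)*s))
              * Real.exp (-β*(K+1)*(t-s)) * Real.exp (-β*(t-s)*(K*(n:ℝ)))
            = Real.exp (-(β + β*K*((n:ℝ)+1))*t + (β*K)*s) := by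
          rw [← Real.exp_add, ← Real.exp_add, ← Real.exp_add]; congr 1; ring
        have e2 : Real.exp (-(β + β*K*((n:ℝ)+1))*t) * Real.exp ((β*K)*s)
            = Real.exp (-(β + β*K*((n:ℝ)+1))*t + (β*K)*s) := (Real.exp_add _ _).symm
        linear_combination (mseq K n * (K*(n:ℝ)+1) * (Real.exp ((β*K)*s)-1)^n) * e1
          - (mseq K n * (K*(n:ℝ)+1) * (Real.exp ((β*K)*s)-1)^n) * e2
      calc β * ∫ s in (0:ℝ)..t, P s n * (K * n + 1)
              * Real.exp (-β * (K+1) * (t - s))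
              * Real.exp (-β * (t - s) * (K * n))
          = β * ∫ s in (0:ℝ)..t,
              (mseq K n * (K*(n:ℝ)+1) * Real.exp (-(β + β*K*((n:ℝ)+1))*t))
                * (Real.exp ((β*K)*s) * (Real.exp ((β*K)*s)-1)^n) := by
            congr 1
            apply intervalIntegral.integral_congr
            intro s _
            exact hint s
        _ = β * ((mseq K n * (K*(n:ℝ)+1) * Real.exp (-(β + β*K*((n:ℝ)+1))*t))
                * ((Real.exp ((β*K)*t) - 1)^(n+1) / ((β*K)*((n:ℝ)+1)))) := by
            rw [intervalIntegral.integral_const_mul, intA (β*K) (by positivity) n t]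
            try push_cast
            try ring
        _ = mseq K (n+1) * Real.exp (-β*t) * (1 - Real.exp (-(β*K)*t))^(n+1) := by
            rw [one_sub_exp_neg (β*K) t, mul_pow, ← Real.exp_nat_mul]
            have e1 : Real.exp (-(β + β*K*((n:ℝ)+1))*t)
                = Real.exp (-β*t) * Real.exp (((n:ℕ)+1:ℝ)*(-(β*K)*t)) := by
              rw [← Real.exp_add]; try (congr 1; push_cast; ring)
            have hm : mseq K (n+1) = mseq K n * (K*(n:ℝ)+1) / (K*((n:ℝ)+1)) := by
              rw [mseq]; try (push_cast; ring)
            rw [e1, hm]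
            have hβ' : β ≠ 0 := ne_of_gt hβ
            have hK' : K ≠ 0 := ne_of_gt hK
            have hn1 : ((n:ℝ)+1) ≠ 0 := by positivity
            field_simp
            push_cast
            ring

/-- Sufficient condition for non-explosion with one branching type `k ≥ 2`:
if `|a| C^{k-1} (1 - e^{-βT(k-1)}) < 1` then
`û(0,x) = E[∏ ψ(z_T^i) · a^ω] = ∑ P(T|ω=n) aⁿ g(n)` (with
`g n = E[∏_{i≤N_T} ψ(z_T^i) | ω = n]`, so `|g n| ≤ C^{(k-1)n+1}`) is finite and bounded by
`C / (1 - |a| C^{k-1}(1 - e^{-βT(k-1)}))^{1/(k-1)}`. -/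
theorem stmt_4 (β T C a : ℝ) (hβ : 0 < β) (hT : 0 < T) (hC : 0 ≤ C)
    (k : ℕ) (hk : 2 ≤ k)
    (P : ℝ → ℕ → ℝ)
    (hP0 : ∀ t : ℝ, P t 0 = Real.exp (-β * t))
    (hPnonneg : ∀ t n, 0 ≤ P t n)
    (hPrec : ∀ (t : ℝ) (n : ℕ),
      P t (n + 1)
        = β * ∫ s in (0:ℝ)..t,
            P s n * ((k - 1 : ℝ) * n + 1)
              * Real.exp (-β * k * (t - s))
              * Real.exp (-β * (t - s) * ((k - 1 : ℝ) * n)))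
    (hcond : |a| * C ^ (k - 1) * (1 - Real.exp (-β * T * ((k : ℝ) - 1))) < 1)
    (g : ℕ → ℝ) (hg : ∀ n, |g n| ≤ C ^ ((k - 1) * n + 1)) :
    Summable (fun n : ℕ => P T n * a ^ n * g n) ∧
    |∑' n : ℕ, P T n * a ^ n * g n|
      ≤ C / (1 - |a| * C ^ (k - 1) * (1 - Real.exp (-β * T * ((k : ℝ) - 1))))
              ^ ((1 : ℝ) / ((k : ℝ) - 1)) := by
  have hk2 : (2:ℝ) ≤ (k:ℝ) := by exact_mod_cast hk
  have hKpos : (0:ℝ) < (k:ℝ) - 1 := by linarith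
  have hPrec' : ∀ (t : ℝ) (n : ℕ),
      P t (n + 1)
        = β * ∫ s in (0:ℝ)..t,
            P s n * (((k:ℝ) - 1) * n + 1)
              * Real.exp (-β * (((k:ℝ)-1)+1) * (t - s))
              * Real.exp (-β * (t - s) * (((k:ℝ) - 1) * n)) := by
    intro t n
    rw [hPrec t n]
    congr 1
    apply intervalIntegral.integral_congr
    intro s _
    simp only
    rw [show ((k:ℝ)-1)+1 = (k:ℝ) by ring]
  have hform := Pformula β ((k:ℝ)-1) hβ hKpos P hP0 hPrec'
  set q : ℝ := 1 - Real.exp (-β * T * ((k : ℝ) - 1)) with hq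
  have hqform : ∀ n : ℕ, P T n = mseq ((k:ℝ)-1) n * Real.exp (-β*T) * q^n := by
    intro n
    rw [hform n T, hq]
    rw [show -(β*((k:ℝ)-1))*T = -β * T * ((k:ℝ)-1) by ring]
  have hq0 : 0 ≤ q := by
    rw [hq]
    have : Real.exp (-β * T * ((k:ℝ)-1)) ≤ 1 := by
      apply Real.exp_le_one_iff.mpr
      nlinarith [mul_pos (mul_pos hβ hT) hKpos]
    linarith
  set r : ℝ := |a| * C ^ (k - 1) * q with hr
  have hr0 : 0 ≤ r := by
    rw [hr]; positivity
  have hr1 : r < 1 := hcond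
  have h1r : 0 < 1 - r := by linarith
  set c : ℝ := (1 - r) ^ ((1:ℝ)/((k:ℝ)-1)) with hc
  have hcpos : 0 < c := Real.rpow_pos_of_pos h1r _
  -- pointwise bound
  have hb : ∀ n : ℕ, |P T n * a ^ n * g n| ≤ C * (mseq ((k:ℝ)-1) n * r^n) := by
    intro n
    have hm := mseq_nonneg hKpos n
    have hPn := hPnonneg T n
    rw [abs_mul, abs_mul, abs_pow, abs_of_nonneg hPn]
    have hgg := hg n
    have hga : 0 ≤ |g n| := abs_nonneg _
    have step1 : P T n * |a|^n * |g n| ≤ P T n * |a|^n * C ^ ((k-1)*n+1) := by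
      apply mul_le_mul_of_nonneg_left hgg
      positivity
    refine le_trans step1 ?_
    have hPle : P T n ≤ mseq ((k:ℝ)-1) n * q^n := by
      rw [hqform n]
      have he1 : Real.exp (-β*T) ≤ 1 := by
        apply Real.exp_le_one_iff.mpr
        nlinarith [mul_pos hβ hT]
      nlinarith [pow_nonneg hq0 n, mul_nonneg hm (pow_nonneg hq0 n)]
    have step2 : P T n * |a|^n * C ^ ((k-1)*n+1)
        ≤ (mseq ((k:ℝ)-1) n * q^n) * |a|^n * C ^ ((k-1)*n+1) := by
      have : (0:ℝ) ≤ |a|^n * C ^ ((k-1)*n+1) := by positivity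
      nlinarith [hPle, this]
    refine le_trans step2 (le_of_eq ?_)
    rw [hr]
    rw [show (k-1)*n+1 = 1 + (k-1)*n by ring, pow_add, pow_mul, pow_one]
    rw [mul_pow, mul_pow]
    ring
  -- summability of the majorant
  have hmsum : Summable (fun n : ℕ => mseq ((k:ℝ)-1) n * r^n) := by
    apply summable_of_sum_range_le (c := c⁻¹)
    · intro n
      have hm := mseq_nonneg hKpos n
      positivity
    · intro N
      have := sum_mseq_le hKpos hr0 hr1 N
      rw [← one_div]
      rw [le_div_iff₀ hcpos]
      exact this
  have hbsum : Summable (fun n : ℕ => C * (mseq ((k:ℝ)-1) n * r^n)) := hmsum.mul_left C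
  have hsum : Summable (fun n : ℕ => P T n * a ^ n * g n) := by
    apply Summable.of_norm_bounded hbsum
    intro n
    rw [Real.norm_eq_abs]
    exact hb n
  refine ⟨hsum, ?_⟩
  have h1 : |∑' n : ℕ, P T n * a ^ n * g n| ≤ ∑' n : ℕ, |P T n * a ^ n * g n| := by
    have := norm_tsum_le_tsum_norm (f := fun n : ℕ => P T n * a ^ n * g n)
      (by simpa only [Real.norm_eq_abs] using hsum.abs)
    simpa only [Real.norm_eq_abs] using this
  have h2 : ∑' n : ℕ, |P T n * a ^ n * g n| ≤ ∑' n : ℕ, C * (mseq ((k:ℝ)-1) n * r^n) :=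
    Summable.tsum_le_tsum hb hsum.abs hbsum
  have h3 : ∑' n : ℕ, C * (mseq ((k:ℝ)-1) n * r^n)
      = C * ∑' n : ℕ, mseq ((k:ℝ)-1) n * r^n := tsum_mul_left
  have h4 : ∑' n : ℕ, mseq ((k:ℝ)-1) n * r^n ≤ c⁻¹ := by
    apply Summable.tsum_le_of_sum_range_le hmsum
    intro N
    have := sum_mseq_le hKpos hr0 hr1 N
    rw [← one_div, le_div_iff₀ hcpos]
    exact this
  have h5 : C * ∑' n : ℕ, mseq ((k:ℝ)-1) n * r^n ≤ C * c⁻¹ :=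
    mul_le_mul_of_nonneg_left h4 hC
  calc |∑' n : ℕ, P T n * a ^ n * g n|
      ≤ ∑' n : ℕ, |P T n * a ^ n * g n| := h1
    _ ≤ ∑' n : ℕ, C * (mseq ((k:ℝ)-1) n * r^n) := h2
    _ = C * ∑' n : ℕ, mseq ((k:ℝ)-1) n * r^n := h3
    _ ≤ C * c⁻¹ := h5
    _ = C / c := by rw [div_eq_mul_inv]
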